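/- Let β > 0, ε > 0 and ρ ∈ (0,1), and define μ := 1 + ε/2 + (1/β)·ln( sinh(βρε/2) / sinh(β(1−ρ)ε/2) ). Then (1/ε)·∫₀^ε tanh(β(μ−1−x)/2) dx = 2ρ − 1. -/

import Mathlib

theorem stmt_11 (β ε ρ μ : ℝ) (hβ : 0 < β) (hε : 0 < ε) (hρ0 : 0 < ρ) (hρ1 : ρ < 1)
    (hμ : μ = 1 + ε / 2 + (1 / β) *
      Real.log (Real.sinh (β * ρ * ε / 2) / Real.sinh (β * (1 - ρ) * ε / 2))) :
    (1 / ε) * ∫ x in (0 : ℝ)..ε, Real.tanh (β * (μ - 1 - x) / 2) = 2 * ρ - 1 := by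
  have h1ρ : 0 < 1 - ρ := by linarith
  set b : ℝ := β * ε / 2 with hb
  have hb0 : 0 < b := by positivity
  set t : ℝ := β * (μ - 1) / 2 with ht
  have hSρ : 0 < Real.sinh (β * ρ * ε / 2) := by positivity
  have hS1 : 0 < Real.sinh (β * (1 - ρ) * ε / 2) := by positivity
  -- key exponential fact
  set u : ℝ := Real.exp (ρ * b) with hu
  set v : ℝ := Real.exp ((1 - ρ) * b) with hv
  have hu0 : 0 < u := Real.exp_pos _
  have hv0 : 0 < v := Real.exp_pos _
  have hsρ : Real.sinh (β * ρ * ε / 2) = (u ^ 2 - 1) / (2 * u) := by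
    rw [Real.sinh_eq, hu]
    rw [show β * ρ * ε / 2 = ρ * b by rw [hb]; ring]
    rw [Real.exp_neg]
    field_simp
  have hs1 : Real.sinh (β * (1 - ρ) * ε / 2) = (v ^ 2 - 1) / (2 * v) := by
    rw [Real.sinh_eq, hv]
    rw [show β * (1 - ρ) * ε / 2 = (1 - ρ) * b by rw [hb]; ring]
    rw [Real.exp_neg]
    field_simp
  have hv1 : 1 < v := by
    rw [hv]; exact Real.one_lt_exp_iff.2 (by positivity)
  have hu1 : 1 < u := by
    rw [hu]; exact Real.one_lt_exp_iff.2 (by positivity)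
  set P : ℝ := Real.exp t with hP
  have hP0 : 0 < P := Real.exp_pos _
  have hE : P ^ 2 = Real.exp b * (Real.sinh (β * ρ * ε / 2) / Real.sinh (β * (1 - ρ) * ε / 2)) := by
    have h2t : 2 * t = b + Real.log (Real.sinh (β * ρ * ε / 2) / Real.sinh (β * (1 - ρ) * ε / 2)) := by
      rw [ht, hμ, hb]; field_simp; ring
    rw [hP, ← Real.exp_nat_mul]
    push_cast
    rw [h2t, Real.exp_add, Real.exp_log (by positivity)]
  have hexpb : Real.exp b = u * v := by
    rw [hu, hv, ← Real.exp_add]; ring_nf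
  have hP2 : P ^ 2 * (v ^ 2 - 1) = v ^ 2 * (u ^ 2 - 1) := by
    rw [hE, hexpb, hsρ, hs1]
    have hv2 : v ^ 2 - 1 ≠ 0 := by nlinarith
    field_simp
  -- cosh identity
  have hkey : Real.cosh t = Real.exp ((2 * ρ - 1) * b) * Real.cosh (t - b) := by
    have he1 : Real.exp ((2 * ρ - 1) * b) = u / v := by
      rw [hu, hv, ← Real.exp_sub]; ring_nf
    have he2 : Real.exp (t - b) = P / (u * v) := by
      rw [Real.exp_sub, ← hP, hexpb]
    have he3 : Real.exp (-(t - b)) = u * v / P := by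
      rw [Real.exp_neg, he2]
      field_simp
    rw [Real.cosh_eq, Real.cosh_eq, Real.exp_neg, ← hP, he1, he2, he3]
    have hP0' : P ≠ 0 := ne_of_gt hP0
    field_simp
    linear_combination hP2
  -- integral computation
  have hderiv : ∀ x ∈ Set.uIcc (0 : ℝ) ε,
      HasDerivAt (fun x => -(2 / β) * Real.log (Real.cosh (β * (μ - 1 - x) / 2)))
        (Real.tanh (β * (μ - 1 - x) / 2)) x := by
    intro x _
    have h1 : HasDerivAt (fun x : ℝ => β * (μ - 1 - x) / 2) (β * (-1) / 2) x :=
      (((hasDerivAt_id x).const_sub (μ - 1)).const_mul β).div_const 2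
    have h2 := (Real.hasDerivAt_cosh (β * (μ - 1 - x) / 2)).comp x h1
    have h3 := (Real.hasDerivAt_log (ne_of_gt (Real.cosh_pos (x := β * (μ - 1 - x) / 2)))).comp x h2
    have h4 := h3.const_mul (-(2 / β))
    refine h4.congr_deriv (Eq.symm ?_)
    rw [Real.tanh_eq_sinh_div_cosh]
    have hc : Real.cosh (β * (μ - 1 - x) / 2) ≠ 0 := ne_of_gt (Real.cosh_pos _)
    have hβ' : β ≠ 0 := ne_of_gt hβ
    rw [div_eq_mul_inv]
    field_simp
  have hcont : IntervalIntegrable (fun x => Real.tanh (β * (μ - 1 - x) / 2))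
      MeasureTheory.volume 0 ε := by
    apply Continuous.intervalIntegrable
    have : (fun x => Real.tanh (β * (μ - 1 - x) / 2))
        = fun x => Real.sinh (β * (μ - 1 - x) / 2) / Real.cosh (β * (μ - 1 - x) / 2) :=
      funext fun x => Real.tanh_eq_sinh_div_cosh _
    rw [this]
    have hg : Continuous fun x : ℝ => β * (μ - 1 - x) / 2 := by fun_prop
    exact Continuous.div (Real.continuous_sinh.comp hg) (Real.continuous_cosh.comp hg)
      fun x => ne_of_gt (Real.cosh_pos _)
  rw [intervalIntegral.integral_eq_sub_of_hasDerivAt hderiv hcont]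
  have harg0 : β * (μ - 1 - 0) / 2 = t := by rw [ht]; ring
  have hargε : β * (μ - 1 - ε) / 2 = t - b := by rw [ht, hb]; ring
  rw [harg0, hargε, hkey, Real.log_mul (ne_of_gt (Real.exp_pos _)) (ne_of_gt (Real.cosh_pos _)),
    Real.log_exp]
  rw [hb]
  field_simp
  ring
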